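/- arXiv:1005.1214 — 3 statements merged into one kernel-verified Lean document; each statement's English description precedes it below -/
import Mathlib

section
/- Let (N_n) be a sequence of positive integers and A_n = N_1 + ... + N_n. Then the series ∑_{n≥1} N_n / A_n² converges, and in fact ∑_{n≥1} N_n / A_n² ≤ 2/N_1 ≤ 2. -/
open Finset

/-- For positive integers `N n` (indexed from 1) with partial sums
`A n = N 1 + ⋯ + N n`, the series `∑ N n / A n ^ 2` converges and is at most
`2 / N 1 ≤ 2`. -/
theorem stmt_0 (N : ℕ → ℕ) (hN : ∀ n, 1 ≤ n → 1 ≤ N n) :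
    Summable (fun n : ℕ =>
      (N (n + 1) : ℝ) / (∑ i ∈ Finset.range (n + 1), (N (i + 1) : ℝ)) ^ 2) ∧
    (∑' n : ℕ, (N (n + 1) : ℝ) / (∑ i ∈ Finset.range (n + 1), (N (i + 1) : ℝ)) ^ 2)
      ≤ 2 / (N 1 : ℝ) ∧
    (2 : ℝ) / (N 1 : ℝ) ≤ 2 := by
  set A : ℕ → ℝ := fun n => ∑ i ∈ Finset.range (n + 1), (N (i + 1) : ℝ) with hA
  have hN1 : (1 : ℝ) ≤ (N 1 : ℝ) := by exact_mod_cast hN 1 le_rfl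
  have hApos : ∀ n, 0 < A n := by
    intro n
    apply Finset.sum_pos
    · intro i _
      have := hN (i + 1) (Nat.le_add_left 1 i)
      exact_mod_cast Nat.lt_of_lt_of_le Nat.zero_lt_one this
    · exact ⟨0, Finset.mem_range.mpr (Nat.succ_pos n)⟩
  have hA0 : A 0 = (N 1 : ℝ) := by simp [hA]
  have hAsucc : ∀ n, A (n + 1) = A n + (N (n + 2) : ℝ) := by
    intro n; simp [hA, Finset.sum_range_succ]
  have hAmono : ∀ n, A n ≤ A (n + 1) := by
    intro n
    rw [hAsucc n]
    have : (0 : ℝ) ≤ (N (n + 2) : ℝ) := Nat.cast_nonneg _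
    linarith
  have hkey : ∀ m, ∑ n ∈ Finset.range (m + 1), (N (n + 1) : ℝ) / (A n) ^ 2
      ≤ 2 / A 0 - 1 / A m := by
    intro m
    induction m with
    | zero =>
      have h0 : 0 < A 0 := hApos 0
      rw [Finset.sum_range_one, hA0]
      rw [hA0] at h0
      rw [div_sub_div _ _ (ne_of_gt h0) (ne_of_gt h0)]
      rw [sq]
      rw [div_le_div_iff₀ (by positivity) (by positivity)]
      ring_nf
      nlinarith
    | succ m ih =>
      rw [Finset.sum_range_succ]
      have hm := hApos m
      have hm1 := hApos (m + 1)
      have hle := hAmono m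
      have h1 : (N (m + 2) : ℝ) / (A (m + 1)) ^ 2 ≤ 1 / A m - 1 / A (m + 1) := by
        rw [div_sub_div _ _ (ne_of_gt hm) (ne_of_gt hm1)]
        have hNval : (N (m + 2) : ℝ) = A (m + 1) - A m := by
          rw [hAsucc m]; ring
        rw [hNval, sq]
        rw [div_le_div_iff₀ (by positivity) (by positivity)]
        nlinarith [mul_nonneg (mul_nonneg (sub_nonneg.2 hle) hm1.le) (sub_nonneg.2 hle)]
      linarith
  have hbound : ∀ m, ∑ n ∈ Finset.range m, (N (n + 1) : ℝ) / (A n) ^ 2 ≤ 2 / (N 1 : ℝ) := by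
    intro m
    cases m with
    | zero => simp only [Finset.sum_range_zero]; exact div_nonneg (by norm_num) (by linarith)
    | succ m =>
      have := hkey m
      have h1 : 0 < 1 / A m := one_div_pos.mpr (hApos m)
      rw [hA0] at this
      linarith
  have hnonneg : ∀ n, 0 ≤ (N (n + 1) : ℝ) / (A n) ^ 2 := by
    intro n; exact div_nonneg (Nat.cast_nonneg _) (sq_nonneg _)
  have hsum : Summable (fun n : ℕ => (N (n + 1) : ℝ) / (A n) ^ 2) :=
    summable_of_sum_range_le hnonneg hbound
  refine ⟨hsum, ?_, ?_⟩
  · exact Summable.tsum_le_of_sum_range_le hsum hbound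
  · rw [div_le_iff₀ (by linarith)]
    nlinarith
end

section
/- The map f : (ξ, α, τ²) ↦ (α/ξ, α/ξ² + τ², 2α/ξ³) from Θ = (0,∞) × (0,∞) × [0,∞) to its image is a bijection, with inverse f⁻¹(m₁, m̄₂, m̄₃) = (√(2m₁/m̄₃), m₁√(2m₁/m̄₃), m̄₂ − √(2 m₁ m̄₃)/2). -/
/-- The map `f : (ξ, α, τ²) ↦ (α/ξ, α/ξ² + τ², 2α/ξ³)` from
`Θ = (0,∞) × (0,∞) × [0,∞)` to its image is a bijection, with inverse
`g(m₁, m̄₂, m̄₃) = (√(2m₁/m̄₃), m₁ √(2m₁/m̄₃), m̄₂ − √(2 m₁ m̄₃)/2)`. -/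
theorem stmt_7 :
    let f : ℝ × ℝ × ℝ → ℝ × ℝ × ℝ := fun p =>
      (p.2.1 / p.1, p.2.1 / p.1 ^ 2 + p.2.2, 2 * p.2.1 / p.1 ^ 3)
    let g : ℝ × ℝ × ℝ → ℝ × ℝ × ℝ := fun m =>
      (Real.sqrt (2 * m.1 / m.2.2), m.1 * Real.sqrt (2 * m.1 / m.2.2),
        m.2.1 - Real.sqrt (2 * m.1 * m.2.2) / 2)
    let Θ : Set (ℝ × ℝ × ℝ) := {p | 0 < p.1 ∧ 0 < p.2.1 ∧ 0 ≤ p.2.2}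
    Set.BijOn f Θ (f '' Θ) ∧
    (∀ p ∈ Θ, g (f p) = p) ∧
    (∀ m ∈ f '' Θ, f (g m) = m) := by
  intro f g Θ
  have hgf : ∀ p ∈ Θ, g (f p) = p := by
    rintro ⟨x, a, t⟩ ⟨hx, ha, ht⟩
    simp only [f, g]
    have hx0 : x ≠ 0 := ne_of_gt hx
    have h1 : 2 * (a / x) / (2 * a / x ^ 3) = x ^ 2 := by
      field_simp
    have h2 : 2 * (a / x) * (2 * a / x ^ 3) = (2 * a / x ^ 2) ^ 2 := by
      field_simp
    have hs1 : Real.sqrt (2 * (a / x) / (2 * a / x ^ 3)) = x := by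
      rw [h1, Real.sqrt_sq hx.le]
    have hs2 : Real.sqrt (2 * (a / x) * (2 * a / x ^ 3)) = 2 * a / x ^ 2 := by
      rw [h2, Real.sqrt_sq (by positivity)]
    simp only [hs1, hs2]
    refine Prod.ext rfl (Prod.ext ?_ ?_) <;> simp <;> field_simp <;> ring
  refine ⟨⟨Set.mapsTo_image f Θ, ?_, Set.surjOn_image f Θ⟩, hgf, ?_⟩
  · intro p hp q hq hfpq
    have := hgf p hp
    rw [hfpq, hgf q hq] at this
    exact this.symm
  · rintro m ⟨p, hp, rfl⟩
    rw [hgf p hp]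
end

section
/- Suppose each of n independent copies of a process with independent increments is observed at times 0 = t_{i0} < t_{i1} < ⋯ < t_{iN_i}, and every increment ΔD_{ij} over an interval of length Δt_{ij} has mean m₁ Δt_{ij} and variance (α/ξ² + τ²)Δt_{ij}. If ∑_{n≥1} (∑_{j=1}^{N_n} 1/Δt_{nj}) (∑_{i=1}^n N_i)^{−2} < ∞, then the estimator m̂_n^{(1)} = (∑_{i=1}^n N_i)^{−1} ∑_{i=1}^n ∑_{j=1}^{N_i} ΔD_{ij}/Δt_{ij} converges almost surely to m₁. -/
open MeasureTheory ProbabilityTheory Filter Finset Asymptotics Topology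
open scoped ENNReal NNReal

theorem my_variance_congr {Ω : Type*} [MeasurableSpace Ω] {μ : MeasureTheory.Measure Ω}
    {X Y : Ω → ℝ} (h : X =ᵐ[μ] Y) : variance X μ = variance Y μ := by
  have hint : μ[X] = μ[Y] := integral_congr_ae h
  unfold variance evariance
  rw [hint]
  congr 1
  apply lintegral_congr_ae
  filter_upwards [h] with ω hω
  rw [hω]

theorem my_variance_sub_const {Ω : Type*} [MeasurableSpace Ω] {μ : MeasureTheory.Measure Ω}
    [IsProbabilityMeasure μ] {X : Ω → ℝ} (hX : Integrable X μ) (c : ℝ) :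
    variance (fun ω => X ω - c) μ = variance X μ := by
  have hint : μ[fun ω => X ω - c] = μ[X] - c := by
    rw [integral_sub hX (integrable_const c), integral_const]
    simp
  unfold variance evariance
  rw [hint]
  congr 1
  apply lintegral_congr
  intro ω
  congr 2
  ring

theorem my_iIndepFun_ae_eq {Ω ι : Type*} [MeasurableSpace Ω] {μ : MeasureTheory.Measure Ω}
    {f g : ι → Ω → ℝ} (hf : iIndepFun f μ)
    (h : ∀ i, f i =ᵐ[μ] g i) : iIndepFun g μ := by
  rw [iIndepFun_iff_measure_inter_preimage_eq_mul] at hf ⊢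
  intro S sets hsets
  have h1 : ∀ i, (g i ⁻¹' sets i : Set Ω) =ᵐ[μ] (f i ⁻¹' sets i) := by
    intro i
    rw [Filter.eventuallyEq_set]
    filter_upwards [h i] with ω hω
    simp only [Set.mem_preimage, hω]
  have h2 : (⋂ i ∈ S, g i ⁻¹' sets i : Set Ω) =ᵐ[μ] (⋂ i ∈ S, f i ⁻¹' sets i) := by
    have hae : ∀ᵐ ω ∂μ, ∀ i ∈ (↑S : Set ι), f i ω = g i ω :=
      (ae_ball_iff S.countable_toSet).2 fun i _ => h i
    rw [Filter.eventuallyEq_set]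
    filter_upwards [hae] with ω hω
    simp only [Set.mem_iInter, Set.mem_preimage]
    constructor
    · intro hh i hi; rw [hω i (Finset.mem_coe.2 hi)]; exact hh i hi
    · intro hh i hi; rw [← hω i (Finset.mem_coe.2 hi)]; exact hh i hi
  rw [measure_congr h2, hf S hsets]
  exact Finset.prod_congr rfl fun i hi => measure_congr (h1 i).symm


theorem my_kronecker {b : ℕ → ℝ} (hb : Monotone b) (hb0 : 0 < b 0)
    (hbtop : Tendsto b atTop atTop) {x : ℕ → ℝ} {L : ℝ}
    (hx : Tendsto (fun n => ∑ k ∈ range n, x k / b k) atTop (𝓝 L)) :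
    Tendsto (fun n => (∑ k ∈ range (n + 1), x k) / b n) atTop (𝓝 0) := by
  have hbpos : ∀ n, 0 < b n := fun n => hb0.trans_le (hb (Nat.zero_le n))
  set u : ℕ → ℝ := fun n => ∑ k ∈ range n, x k / b k with hu
  set A : ℕ → ℝ := fun n => ∑ i ∈ range n, (b (i + 1) - b i) * (u (i + 1) - L) with hA
  have key : ∀ n, ∑ k ∈ range (n + 1), x k
      = b n * u (n + 1) - ∑ i ∈ range n, (b (i + 1) - b i) * u (i + 1) := by
    intro n
    have : ∀ k, x k = b k • (x k / b k) := by
      intro k; rw [smul_eq_mul, mul_div_cancel₀ _ (hbpos k).ne']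
    calc ∑ k ∈ range (n + 1), x k = ∑ k ∈ range (n + 1), b k • (x k / b k) := by
          exact Finset.sum_congr rfl fun k _ => this k
      _ = b ((n + 1) - 1) • ∑ i ∈ range (n + 1), (x i / b i)
          - ∑ i ∈ range ((n + 1) - 1), (b (i + 1) - b i) • ∑ j ∈ range (i + 1), (x j / b j) :=
          Finset.sum_range_by_parts b (fun k => x k / b k) (n + 1)
      _ = b n * u (n + 1) - ∑ i ∈ range n, (b (i + 1) - b i) * u (i + 1) := by
          simp [smul_eq_mul, hu]
  have hu1 : Tendsto (fun n => u (n + 1)) atTop (𝓝 L) := hx.comp (tendsto_add_atTop_nat 1)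
  have hv : Tendsto (fun n => u (n + 1) - L) atTop (𝓝 0) := by
    simpa using hu1.sub (tendsto_const_nhds (x := L))
  have hg0 : ∀ i, (0:ℝ) ≤ b (i + 1) - b i := fun i => sub_nonneg.2 (hb (Nat.le_succ i))
  have hsum : ∀ n, ∑ i ∈ range n, (b (i + 1) - b i) = b n - b 0 := fun n =>
    Finset.sum_range_sub b n
  have hgtop : Tendsto (fun n => ∑ i ∈ range n, (b (i + 1) - b i)) atTop atTop := by
    simp only [hsum]
    exact tendsto_atTop_add_const_right atTop (-b 0) hbtop |>.congr (by intro n; ring)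
  have hfo : (fun i => (b (i + 1) - b i) * (u (i + 1) - L)) =o[atTop]
      (fun i => b (i + 1) - b i) := by
    have := (isBigO_refl (fun i => b (i + 1) - b i) atTop).mul_isLittleO
      ((isLittleO_one_iff ℝ).2 hv)
    simpa using this
  have hAo : A =o[atTop] (fun n => ∑ i ∈ range n, (b (i + 1) - b i)) :=
    hfo.sum_range hg0 hgtop
  have hAob : A =o[atTop] b := by
    refine hAo.trans_isBigO (IsBigO.of_bound 1 ?_)
    filter_upwards with n
    rw [hsum, one_mul, Real.norm_eq_abs, Real.norm_eq_abs,
      abs_of_nonneg (sub_nonneg.2 (hb (Nat.zero_le n))), abs_of_nonneg (hbpos n).le]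
    linarith [hb0]
  have hAdiv : Tendsto (fun n => A n / b n) atTop (𝓝 0) :=
    hAob.tendsto_div_nhds_zero
  have hinv : Tendsto (fun n => b 0 / b n) atTop (𝓝 0) := by
    simpa [div_eq_mul_inv] using (tendsto_const_nhds (x := b 0)).mul hbtop.inv_tendsto_atTop
  have main : Tendsto (fun n => u (n + 1) - A n / b n - (1 - b 0 / b n) * L) atTop
      (𝓝 (L - 0 - (1 - 0) * L)) :=
    (hu1.sub hAdiv).sub (((tendsto_const_nhds (x := (1:ℝ))).sub hinv).mul tendsto_const_nhds)
  have : (L - 0 - (1 - 0) * L) = 0 := by ring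
  rw [this] at main
  refine main.congr fun n => ?_
  have hbn := (hbpos n).ne'
  have : ∑ i ∈ range n, (b (i + 1) - b i) * u (i + 1)
      = A n + (b n - b 0) * L := by
    rw [hA]
    simp only [← hsum n, Finset.sum_mul, ← Finset.sum_add_distrib]
    exact Finset.sum_congr rfl fun i _ => by ring
  rw [key n, this]
  field_simp
  ring


/-- If the increments `ΔD i j` (process `i` observed at `N i`
instants, interval lengths `Δt i j > 0`) are independent with
`E[ΔD i j] = m₁ Δt i j` and `Var(ΔD i j) = (α/ξ² + τ²) Δt i j`, and if
(H₁) `∑_n (∑_{j<N n} 1/Δt n j) (∑_{i≤n} N i)⁻² < ∞`, then the moment estimator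
`m̂ₙ⁽¹⁾ = (∑_{i<n} N i)⁻¹ ∑_{i<n} ∑_{j<N i} ΔD i j / Δt i j` converges a.s. to `m₁`. -/
theorem stmt_10 {Ω : Type*} [MeasureSpace Ω] (μ : Measure Ω) [IsProbabilityMeasure μ]
    (ΔD : ℕ → ℕ → Ω → ℝ) (Δt : ℕ → ℕ → ℝ) (N : ℕ → ℕ)
    (m₁ α ξ τ : ℝ) (hξ : 0 < ξ)
    (hN : ∀ i, 1 ≤ N i) (hΔt : ∀ i j, 0 < Δt i j)
    (h2 : ∀ i j, MemLp (ΔD i j) 2 μ)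
    (hindep : iIndepFun
      (fun p : ℕ × ℕ => ΔD p.1 p.2) μ)
    (hmean : ∀ i j, ∫ ω, ΔD i j ω ∂μ = m₁ * Δt i j)
    (hvar : ∀ i j, variance (ΔD i j) μ = (α / ξ ^ 2 + τ ^ 2) * Δt i j)
    (hH1 : Summable (fun n : ℕ =>
      (∑ j ∈ Finset.range (N n), 1 / Δt n j)
        / (∑ i ∈ Finset.range (n + 1), (N i : ℝ)) ^ 2)) :
    ∀ᵐ ω ∂μ, Tendsto
      (fun n => (∑ i ∈ Finset.range n, (N i : ℝ))⁻¹ *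
        ∑ i ∈ Finset.range n, ∑ j ∈ Finset.range (N i), ΔD i j ω / Δt i j)
      atTop (nhds m₁) := by
  classical
  set c : ℝ := α / ξ ^ 2 + τ ^ 2 with hcdef
  have hc0 : 0 ≤ c := by
    have h := variance_nonneg (ΔD 0 0) μ
    rw [hvar 0 0] at h
    exact nonneg_of_mul_nonneg_left h (hΔt 0 0)
  -- measurable versions
  set Y : ℕ × ℕ → Ω → ℝ := fun p => (h2 p.1 p.2).1.mk (ΔD p.1 p.2) with hYdef
  have hYae : ∀ p : ℕ × ℕ, ΔD p.1 p.2 =ᵐ[μ] Y p := fun p => (h2 p.1 p.2).1.ae_eq_mk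
  have hYmeas : ∀ p, Measurable (Y p) :=
    fun p => (h2 p.1 p.2).1.stronglyMeasurable_mk.measurable
  have hY2 : ∀ p : ℕ × ℕ, MemLp (Y p) 2 μ := fun p => (h2 p.1 p.2).ae_eq (hYae p)
  have hYint : ∀ p : ℕ × ℕ, Integrable (Y p) μ := fun p => (hY2 p).integrable one_le_two
  have hYmean : ∀ p : ℕ × ℕ, μ[Y p] = m₁ * Δt p.1 p.2 := fun p => by
    rw [← integral_congr_ae (hYae p)]; exact hmean p.1 p.2
  have hYvar : ∀ p : ℕ × ℕ, variance (Y p) μ = c * Δt p.1 p.2 := fun p => by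
    rw [← my_variance_congr (hYae p)]; exact hvar p.1 p.2
  have hYindep : iIndepFun Y μ :=
    my_iIndepFun_ae_eq hindep hYae
  -- normalized increments
  set X : ℕ × ℕ → Ω → ℝ := fun p ω => (Δt p.1 p.2)⁻¹ * Y p ω - m₁ with hXdef
  have hXmeas : ∀ p, Measurable (X p) :=
    fun p => ((hYmeas p).const_mul _).sub measurable_const
  have hX2 : ∀ p : ℕ × ℕ, MemLp (X p) 2 μ :=
    fun p => ((hY2 p).const_mul _).sub (memLp_const m₁)
  have hXint : ∀ p : ℕ × ℕ, Integrable (X p) μ := fun p => (hX2 p).integrable one_le_two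
  have hXmean : ∀ p : ℕ × ℕ, μ[X p] = 0 := by
    intro p
    have : μ[X p] = (Δt p.1 p.2)⁻¹ * μ[Y p] - m₁ := by
      rw [hXdef]
      rw [integral_sub ((hYint p).const_mul _) (integrable_const m₁), integral_const]
      simp [integral_const_mul]
    rw [this, hYmean p]
    have hne : Δt p.1 p.2 ≠ 0 := (hΔt p.1 p.2).ne'
    field_simp
    ring
  have hXvar : ∀ p : ℕ × ℕ, variance (X p) μ = c * (Δt p.1 p.2)⁻¹ := by
    intro p
    have h1 : variance (X p) μ = variance (fun ω => (Δt p.1 p.2)⁻¹ * Y p ω) μ :=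
      my_variance_sub_const ((hYint p).const_mul _) m₁
    rw [h1, variance_const_mul, hYvar p]
    have hne : Δt p.1 p.2 ≠ 0 := (hΔt p.1 p.2).ne'
    have : ((Δt p.1 p.2)⁻¹) ^ 2 * (c * Δt p.1 p.2)
        = c * ((Δt p.1 p.2)⁻¹ * ((Δt p.1 p.2)⁻¹ * Δt p.1 p.2)) := by ring
    rw [this, inv_mul_cancel₀ hne, mul_one]
  -- per-process sums
  set Z : ℕ → Ω → ℝ := fun i => ∑ j ∈ range (N i), X (i, j) with hZdef
  have hZ2 : ∀ i, MemLp (Z i) 2 μ := fun i => memLp_finset_sum' _ fun j _ => hX2 (i, j)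
  have hZint : ∀ i, Integrable (Z i) μ := fun i => (hZ2 i).integrable one_le_two
  have hZmean : ∀ i, μ[Z i] = 0 := by
    intro i
    show ∫ ω, (∑ j ∈ range (N i), X (i, j)) ω ∂μ = 0
    simp only [Finset.sum_apply]
    rw [integral_finset_sum _ fun j _ => hXint (i, j)]
    simp [hXmean]
  -- σ-algebras generated by each process
  set 𝔪 : ℕ → MeasurableSpace Ω := fun i =>
    ⨆ p ∈ {q : ℕ × ℕ | q.1 = i}, MeasurableSpace.comap (Y p) inferInstance with h𝔪def
  have hcomap_le : ∀ p : ℕ × ℕ, MeasurableSpace.comap (Y p) inferInstance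
      ≤ (inferInstance : MeasurableSpace Ω) := fun p => (hYmeas p).comap_le
  have h𝔪le : ∀ i, 𝔪 i ≤ (inferInstance : MeasurableSpace Ω) :=
    fun i => iSup₂_le fun p _ => hcomap_le p
  have hX𝔪 : ∀ (i j : ℕ), Measurable[𝔪 i] (X (i, j)) := by
    intro i j
    have h0 : Measurable[MeasurableSpace.comap (Y (i, j)) inferInstance] (Y (i, j)) :=
      Measurable.of_comap_le le_rfl
    have h1 : Measurable[MeasurableSpace.comap (Y (i, j)) inferInstance] (X (i, j)) :=
      (h0.const_mul _).sub measurable_const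
    exact h1.mono (le_biSup (fun p => MeasurableSpace.comap (Y p) inferInstance)
      (show ((i, j) : ℕ × ℕ) ∈ {q : ℕ × ℕ | q.1 = i} from rfl)) le_rfl
  have hZ𝔪 : ∀ i, Measurable[𝔪 i] (Z i) := by
    intro i
    have : Measurable[𝔪 i] fun ω => ∑ j ∈ range (N i), X (i, j) ω :=
      Finset.measurable_sum _ fun j _ => hX𝔪 i j
    have heq : Z i = fun ω => ∑ j ∈ range (N i), X (i, j) ω := by
      funext ω
      exact Finset.sum_apply ω (range (N i)) fun j => X (i, j)
    rw [heq]
    exact this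
  have h𝔪indep : ∀ i k, i ≠ k → Indep (𝔪 i) (𝔪 k) μ := by
    intro i k hik
    refine indep_iSup_of_disjoint hcomap_le hYindep.iIndep ?_
    rw [Set.disjoint_left]
    rintro p (hp : p.1 = i) (hp' : p.1 = k)
    exact hik (hp ▸ hp')
  have hZpair : ∀ i k, i ≠ k → IndepFun (Z i) (Z k) μ := by
    intro i k hik
    exact indep_of_indep_of_le_right
      (indep_of_indep_of_le_left (h𝔪indep i k hik)
        (measurable_iff_comap_le.1 (hZ𝔪 i)))
      (measurable_iff_comap_le.1 (hZ𝔪 k))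
  have hZvar : ∀ i, variance (Z i) μ = c * ∑ j ∈ range (N i), (Δt i j)⁻¹ := by
    intro i
    have hpair : Set.Pairwise ↑(range (N i))
        fun j j' => IndepFun (X (i, j)) (X (i, j')) μ := by
      intro j _ j' _ hjj'
      have hne : ((i, j) : ℕ × ℕ) ≠ (i, j') := by simp [hjj']
      have hYind := hYindep.indepFun hne
      have : ∀ j'' : ℕ, X (i, j'') = (fun x => (Δt i j'')⁻¹ * x - m₁) ∘ Y (i, j'') := fun _ => rfl
      rw [this j, this j']
      exact hYind.comp ((measurable_id.const_mul _).sub measurable_const)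
        ((measurable_id.const_mul _).sub measurable_const)
    show variance (∑ j ∈ range (N i), X (i, j)) μ = _
    rw [IndepFun.variance_sum (fun j _ => hX2 (i, j)) hpair]
    rw [Finset.mul_sum]
    exact Finset.sum_congr rfl fun j _ => hXvar (i, j)
  -- the normalizing sequence
  set S : ℕ → ℝ := fun n => ∑ i ∈ range (n + 1), (N i : ℝ) with hSdef
  have hS1 : ∀ n : ℕ, (n : ℝ) + 1 ≤ S n := by
    intro n
    have : ∑ i ∈ range (n + 1), (1 : ℝ) ≤ ∑ i ∈ range (n + 1), (N i : ℝ) :=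
      Finset.sum_le_sum fun i _ => by exact_mod_cast hN i
    simpa using this
  have hSpos : ∀ n, 0 < S n := fun n => lt_of_lt_of_le (by positivity) (hS1 n)
  have hSmono : Monotone S := by
    apply monotone_nat_of_le_succ
    intro n
    rw [hSdef]
    simp only
    rw [Finset.sum_range_succ (fun i => (N i : ℝ)) (n + 1)]
    have : (0 : ℝ) ≤ N (n + 1) := by positivity
    linarith
  have hStop : Tendsto S atTop atTop := by
    apply tendsto_atTop_mono hS1
    exact tendsto_atTop_add_const_right atTop 1 tendsto_natCast_atTop_atTop
  -- the weighted increments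
  set W : ℕ → Ω → ℝ := fun i => (S i)⁻¹ • Z i with hWdef
  have hW2 : ∀ i, MemLp (W i) 2 μ := fun i => (hZ2 i).const_smul _
  have hWint : ∀ i, Integrable (W i) μ := fun i => (hW2 i).integrable one_le_two
  have hWmean : ∀ i, μ[W i] = 0 := by
    intro i
    simp only [hWdef, Pi.smul_apply, smul_eq_mul]
    rw [integral_const_mul, hZmean i, mul_zero]
  set v : ℕ → ℝ := fun n => (∑ j ∈ range (N n), 1 / Δt n j) / S n ^ 2 with hvdef
  have hv0 : ∀ n, 0 ≤ v n := by
    intro n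
    apply div_nonneg _ (sq_nonneg _)
    exact Finset.sum_nonneg fun j _ => one_div_nonneg.2 (hΔt n j).le
  have hWvar : ∀ i, variance (W i) μ = c * v i := by
    intro i
    show variance ((S i)⁻¹ • Z i) μ = c * v i
    rw [variance_smul, hZvar i]
    show _ = c * ((∑ j ∈ range (N i), 1 / Δt i j) / S i ^ 2)
    simp only [one_div]
    rw [div_eq_mul_inv, ← inv_pow]
    ring
  have hW𝔪 : ∀ i, Measurable[𝔪 i] (W i) := fun i => (hZ𝔪 i).const_smul _
  have hWpair : ∀ i k, i ≠ k → IndepFun (W i) (W k) μ := by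
    intro i k hik
    exact indep_of_indep_of_le_right
      (indep_of_indep_of_le_left (h𝔪indep i k hik)
        (measurable_iff_comap_le.1 (hW𝔪 i)))
      (measurable_iff_comap_le.1 (hW𝔪 k))
  -- the martingale
  set M : ℕ → Ω → ℝ := fun n => ∑ i ∈ range n, W i with hMdef
  have hM2 : ∀ n, MemLp (M n) 2 μ := fun n => memLp_finset_sum' _ fun i _ => hW2 i
  have hMint : ∀ n, Integrable (M n) μ := fun n => (hM2 n).integrable one_le_two
  have hMmean : ∀ n, μ[M n] = 0 := by
    intro n
    rw [hMdef]
    simp only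
    have heq : (∑ i ∈ range n, W i) = fun ω => ∑ i ∈ range n, W i ω := by
      funext ω; exact Finset.sum_apply ω (range n) W
    rw [heq, integral_finset_sum _ fun i _ => hWint i]
    simp [hWmean]
  have hMvar : ∀ n, variance (M n) μ ≤ c * ∑' k, v k := by
    intro n
    have h1 : variance (M n) μ = ∑ i ∈ range n, variance (W i) μ := by
      rw [hMdef]
      exact IndepFun.variance_sum (fun i _ => hW2 i)
        (fun i _ k hk hik => hWpair i k hik)
    rw [h1]
    have h2 : ∑ i ∈ range n, variance (W i) μ = c * ∑ i ∈ range n, v i := by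
      rw [Finset.mul_sum]
      exact Finset.sum_congr rfl fun i _ => hWvar i
    rw [h2]
    apply mul_le_mul_of_nonneg_left _ hc0
    exact Summable.sum_le_tsum (range n) (fun i _ => hv0 i) hH1
  -- the filtration
  set F : ℕ → MeasurableSpace Ω := fun n =>
    ⨆ p ∈ {q : ℕ × ℕ | q.1 < n}, MeasurableSpace.comap (Y p) inferInstance with hFdef
  have hFle : ∀ n, F n ≤ (inferInstance : MeasurableSpace Ω) :=
    fun n => iSup₂_le fun p _ => hcomap_le p
  set ℱ : Filtration ℕ (inferInstance : MeasurableSpace Ω) :=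
    { seq := F
      mono' := fun m n hmn => biSup_mono fun p hp => lt_of_lt_of_le hp hmn
      le' := hFle } with hℱdef
  have hℱapp : ∀ n, ℱ n = F n := fun n => rfl
  have h𝔪F : ∀ i n, i < n → 𝔪 i ≤ F n := by
    intro i n hin
    refine iSup₂_le fun p hp => ?_
    exact le_biSup (fun p => MeasurableSpace.comap (Y p) inferInstance)
      (show p ∈ {q : ℕ × ℕ | q.1 < n} by
        simp only [Set.mem_setOf_eq] at hp ⊢; omega)
  have hWF : ∀ i n, i < n → Measurable[F n] (W i) :=
    fun i n hin => (hW𝔪 i).mono (h𝔪F i n hin) le_rfl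
  have hadp : StronglyAdapted ℱ M := by
    intro n
    rw [hℱapp n]
    have : Measurable[F n] fun ω => ∑ i ∈ range n, W i ω :=
      Finset.measurable_sum _ fun i hi => hWF i n (Finset.mem_range.1 hi)
    have heq : M n = fun ω => ∑ i ∈ range n, W i ω := by
      funext ω; exact Finset.sum_apply ω (range n) W
    rw [heq]
    exact this.stronglyMeasurable
  have hindepF : ∀ n, Indep (𝔪 n) (F n) μ := by
    intro n
    refine indep_iSup_of_disjoint hcomap_le hYindep.iIndep ?_
    rw [Set.disjoint_left]
    rintro p (hp : p.1 = n) (hp' : p.1 < n)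
    omega
  have hmart : Martingale M ℱ μ := by
    refine martingale_nat hadp hMint fun n => ?_
    have hMsucc : M (n + 1) = M n + W n := by
      rw [hMdef]
      simp only
      exact Finset.sum_range_succ W n
    have h1 : μ[M (n + 1)|ℱ n] =ᵐ[μ] μ[M n|ℱ n] + μ[W n|ℱ n] := by
      rw [hMsucc]
      exact condExp_add (hMint n) (hWint n) _
    have h2 : μ[M n|ℱ n] = M n :=
      condExp_of_stronglyMeasurable (ℱ.le n) (hadp n) (hMint n)
    have h3 : μ[W n|ℱ n] =ᵐ[μ] fun _ => μ[W n] := by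
      refine condExp_indep_eq (h𝔪le n) (ℱ.le n)
        ((hW𝔪 n).stronglyMeasurable) ?_
      exact hindepF n
    refine EventuallyEq.symm (h1.trans ?_)
    rw [h2]
    filter_upwards [h3] with ω hω
    simp only [Pi.add_apply, hω, hWmean n, add_zero]
  -- L¹ boundedness
  set T : ℝ := ∑' k, v k with hTdef
  have hT0 : 0 ≤ T := tsum_nonneg hv0
  have hbdd : ∀ n, eLpNorm (M n) 1 μ ≤ ENNReal.ofReal (Real.sqrt (c * T)) := by
    intro n
    have hle12 : eLpNorm (M n) 1 μ ≤ eLpNorm (M n) 2 μ :=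
      eLpNorm_le_eLpNorm_of_exponent_le one_le_two (hM2 n).1
    refine hle12.trans ?_
    have h2norm : eLpNorm (M n) 2 μ = (evariance (M n) μ) ^ (1 / 2 : ℝ) := by
      rw [eLpNorm_eq_lintegral_rpow_enorm_toReal two_ne_zero ENNReal.ofNat_ne_top, evariance,
        hMmean n]
      norm_num
    rw [h2norm]
    have hev : evariance (M n) μ = ENNReal.ofReal (variance (M n) μ) :=
      ((hM2 n).ofReal_variance_eq).symm
    rw [hev]
    have hle : ENNReal.ofReal (variance (M n) μ) ≤ ENNReal.ofReal (c * T) :=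
      ENNReal.ofReal_le_ofReal (hMvar n)
    calc (ENNReal.ofReal (variance (M n) μ)) ^ (1 / 2 : ℝ)
        ≤ (ENNReal.ofReal (c * T)) ^ (1 / 2 : ℝ) :=
          ENNReal.rpow_le_rpow hle (by norm_num)
      _ = ENNReal.ofReal ((c * T) ^ (1 / 2 : ℝ)) :=
          ENNReal.ofReal_rpow_of_nonneg (by positivity) (by norm_num)
      _ = ENNReal.ofReal (Real.sqrt (c * T)) := by rw [Real.sqrt_eq_rpow]
  -- almost sure convergence of the martingale
  have hconv : ∀ᵐ ω ∂μ, ∃ l, Tendsto (fun n => M n ω) atTop (𝓝 l) := by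
    refine Submartingale.exists_ae_tendsto_of_bdd hmart.submartingale
      (R := (Real.sqrt (c * T)).toNNReal) fun n => ?_
    have hcoe : ((Real.sqrt (c * T)).toNNReal : ℝ≥0∞) = ENNReal.ofReal (Real.sqrt (c * T)) :=
      rfl
    rw [hcoe]
    exact hbdd n
  -- assembly
  have hgood : ∀ᵐ ω ∂μ, ∀ p : ℕ × ℕ, ΔD p.1 p.2 ω = Y p ω :=
    ae_all_iff.2 fun p => hYae p
  filter_upwards [hconv, hgood] with ω hω hgω
  obtain ⟨l, hl⟩ := hω
  have hl' : Tendsto (fun n => ∑ k ∈ range n, Z k ω / S k) atTop (𝓝 l) := by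
    refine hl.congr fun n => ?_
    simp only [hMdef]
    rw [Finset.sum_apply ω (range n) W]
    refine Finset.sum_congr rfl fun i _ => ?_
    simp only [hWdef, Pi.smul_apply, smul_eq_mul]
    rw [div_eq_inv_mul]
  have hkron : Tendsto (fun n => (∑ k ∈ range (n + 1), Z k ω) / S n) atTop (𝓝 0) :=
    my_kronecker hSmono (hSpos 0) hStop hl'
  have hshift : Tendsto (fun n => (∑ k ∈ range ((n - 1) + 1), Z k ω) / S (n - 1))
      atTop (𝓝 0) := hkron.comp (tendsto_sub_atTop_nat 1)
  have hfinal : Tendsto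
      (fun n => (∑ k ∈ range ((n - 1) + 1), Z k ω) / S (n - 1) + m₁) atTop (𝓝 m₁) := by
    have := hshift.add (tendsto_const_nhds (x := m₁))
    rwa [zero_add] at this
  refine hfinal.congr' ?_
  filter_upwards [eventually_ge_atTop 1] with n hn
  have hn1 : n - 1 + 1 = n := Nat.succ_pred_eq_of_pos hn
  have hSB : S (n - 1) = ∑ i ∈ range n, (N i : ℝ) := by
    rw [hSdef]; simp only; rw [hn1]
  have hBpos : (0 : ℝ) < ∑ i ∈ range n, (N i : ℝ) := by
    rw [← hSB]; exact hSpos (n - 1)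
  have hinner : ∀ i, ∑ j ∈ range (N i), ΔD i j ω / Δt i j = Z i ω + (N i : ℝ) * m₁ := by
    intro i
    have hZapp : Z i ω = ∑ j ∈ range (N i), X (i, j) ω := by
      rw [hZdef]; simp only; exact Finset.sum_apply ω (range (N i)) fun j => X (i, j)
    have hconst : (N i : ℝ) * m₁ = ∑ _j ∈ range (N i), m₁ := by
      simp [Finset.sum_const, Finset.card_range, mul_comm]
    rw [hZapp, hconst, ← Finset.sum_add_distrib]
    refine Finset.sum_congr rfl fun j _ => ?_
    have : ΔD i j ω = Y (i, j) ω := hgω (i, j)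
    rw [this]
    simp only [hXdef]
    rw [div_eq_inv_mul, sub_add_cancel]
  have hsum : ∑ i ∈ range n, ∑ j ∈ range (N i), ΔD i j ω / Δt i j
      = (∑ i ∈ range n, Z i ω) + (∑ i ∈ range n, (N i : ℝ)) * m₁ := by
    rw [Finset.sum_mul, ← Finset.sum_add_distrib]
    exact Finset.sum_congr rfl fun i _ => hinner i
  rw [hn1, hsum, hSB, mul_add, ← div_eq_inv_mul, inv_mul_cancel_left₀ hBpos.ne']
end
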